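/- If f : (0,∞) → (0,∞) is operator concave, then its perspective g(t,s) = s·f(t/s), evaluated in commuting positive definite operators, is jointly concave: for commuting positive definite operators (on a finite-dimensional Hilbert space) A₁, B₁ and A₂, B₂ with all four operators pairwise commuting, and λ ∈ [0,1], g(λA₁+(1-λ)A₂, λB₁+(1-λ)B₂) ≥ λ g(A₁,B₁) + (1-λ) g(A₂,B₂). -/

import Mathlib

open Matrix ComplexOrder

/-- Functional calculus of `f : ℝ → ℝ` on a Hermitian matrix via the spectral
theorem. -/
noncomputable def herFun {n : ℕ} (f : ℝ → ℝ) {A : Matrix (Fin n) (Fin n) ℂ}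
    (hA : A.IsHermitian) : Matrix (Fin n) (Fin n) ℂ :=
  (hA.eigenvectorUnitary : Matrix (Fin n) (Fin n) ℂ) *
    Matrix.diagonal (Complex.ofReal ∘ f ∘ hA.eigenvalues) *
    star (hA.eigenvectorUnitary : Matrix (Fin n) (Fin n) ℂ)

/-- `f` is operator concave on `(0,∞)`: `f(λA+(1-λ)B) ≥ λf(A)+(1-λ)f(B)` in the
Loewner order, for positive definite `A, B`. -/
def OperatorConcave (f : ℝ → ℝ) : Prop :=
  ∀ (n : ℕ) (A B : Matrix (Fin n) (Fin n) ℂ) (hA : A.PosDef) (hB : B.PosDef)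
    (l : ℝ), 0 ≤ l → l ≤ 1 →
    ∀ (hAB : (l • A + (1 - l) • B).PosDef),
      (herFun f hAB.1 - (l • herFun f hA.1 + (1 - l) • herFun f hB.1)).PosSemidef

lemma herFun_eq_smul_one {m : ℕ} (f : ℝ → ℝ) (x : ℝ) {A : Matrix (Fin m) (Fin m) ℂ}
    (hA : A.IsHermitian) (h : A = (x : ℂ) • 1) :
    herFun f hA = ((f x : ℝ) : ℂ) • 1 := by
  subst h
  have hUU : (hA.eigenvectorUnitary : Matrix (Fin m) (Fin m) ℂ) *
      star (hA.eigenvectorUnitary : Matrix (Fin m) (Fin m) ℂ) = 1 :=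
    (Matrix.mem_unitaryGroup_iff).mp hA.eigenvectorUnitary.2
  have hsUU : star (hA.eigenvectorUnitary : Matrix (Fin m) (Fin m) ℂ) *
      (hA.eigenvectorUnitary : Matrix (Fin m) (Fin m) ℂ) = 1 :=
    (Matrix.mem_unitaryGroup_iff').mp hA.eigenvectorUnitary.2
  have hdiag : star (hA.eigenvectorUnitary : Matrix (Fin m) (Fin m) ℂ) * ((x : ℂ) • 1) *
      (hA.eigenvectorUnitary : Matrix (Fin m) (Fin m) ℂ)
      = diagonal (RCLike.ofReal ∘ hA.eigenvalues) := by
    have := hA.conjStarAlgAut_star_eigenvectorUnitary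
    simpa using this
  have hdiag' : ((x : ℂ) • 1 : Matrix (Fin m) (Fin m) ℂ)
      = diagonal (RCLike.ofReal ∘ hA.eigenvalues) := by
    rw [← hdiag, mul_smul_comm, smul_mul_assoc, mul_one, hsUU]
  have hev : ∀ i, hA.eigenvalues i = x := by
    intro i
    have := congrFun (congrFun hdiag' i) i
    simp only [Matrix.smul_apply, Matrix.one_apply_eq, smul_eq_mul, mul_one,
      diagonal_apply_eq, Function.comp_apply] at this
    exact RCLike.ofReal_inj.mp this.symm
  have hd : (diagonal (Complex.ofReal ∘ f ∘ hA.eigenvalues) : Matrix (Fin m) (Fin m) ℂ)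
      = ((f x : ℝ) : ℂ) • 1 := by
    ext i j
    by_cases hij : i = j
    · subst hij; simp [hev]
    · simp [diagonal_apply_ne _ hij, Matrix.one_apply_ne hij]
  rw [herFun, hd, mul_smul_comm, smul_mul_assoc, mul_one, hUU]

lemma posDef_smul_one {m : ℕ} {x : ℝ} (hx : 0 < x) :
    ((x : ℂ) • 1 : Matrix (Fin m) (Fin m) ℂ).PosDef := by
  have : ((x : ℂ) • 1 : Matrix (Fin m) (Fin m) ℂ) = diagonal (fun _ => (x : ℂ)) := by
    ext i j
    by_cases hij : i = j
    · subst hij; simp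
    · simp [diagonal_apply_ne _ hij, Matrix.one_apply_ne hij]
  rw [this]
  exact Matrix.posDef_diagonal_iff.mpr fun i => by
    exact_mod_cast (Complex.zero_lt_real).mpr hx

lemma scalar_concave (f : ℝ → ℝ) (hf : OperatorConcave f) {x y : ℝ} (hx : 0 < x) (hy : 0 < y)
    {l : ℝ} (hl0 : 0 ≤ l) (hl1 : l ≤ 1) :
    l * f x + (1 - l) * f y ≤ f (l * x + (1 - l) * y) := by
  set A : Matrix (Fin 1) (Fin 1) ℂ := (x : ℂ) • 1 with hAdef
  set B : Matrix (Fin 1) (Fin 1) ℂ := (y : ℂ) • 1 with hBdef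
  have hA : A.PosDef := posDef_smul_one hx
  have hB : B.PosDef := posDef_smul_one hy
  have hz : (0:ℝ) < l * x + (1 - l) * y := by
    rcases eq_or_lt_of_le hl0 with h | h
    · rw [← h]; ring_nf; linarith
    · nlinarith [mul_pos h hx, mul_nonneg (by linarith : (0:ℝ) ≤ 1 - l) hy.le]
  have hsum : l • A + (1 - l) • B = ((l * x + (1 - l) * y : ℝ) : ℂ) • 1 := by
    ext i j
    by_cases hij : i = j
    · subst hij
      simp [hAdef, hBdef, Matrix.smul_apply, Matrix.one_apply_eq]
      try push_cast
      try ring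
    · simp [hAdef, hBdef, Matrix.smul_apply, Matrix.one_apply_ne hij]
  have hAB : (l • A + (1 - l) • B).PosDef := by
    rw [hsum]; exact posDef_smul_one hz
  have h := hf 1 A B hA hB l hl0 hl1 hAB
  rw [herFun_eq_smul_one f (l * x + (1 - l) * y) hAB.1 hsum,
    herFun_eq_smul_one f x hA.1 rfl, herFun_eq_smul_one f y hB.1 rfl] at h
  have hM : (((f (l * x + (1 - l) * y) : ℝ) : ℂ) • 1 -
      (l • (((f x : ℝ) : ℂ) • 1) + (1 - l) • (((f y : ℝ) : ℂ) • 1)) : Matrix (Fin 1) (Fin 1) ℂ)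
      = diagonal (fun _ => ((f (l * x + (1 - l) * y) - (l * f x + (1 - l) * f y) : ℝ) : ℂ)) := by
    ext i j
    by_cases hij : i = j
    · subst hij
      simp [Matrix.smul_apply, Matrix.one_apply_eq]
      try push_cast
      try ring
    · simp [Matrix.smul_apply, Matrix.one_apply_ne hij, diagonal_apply_ne _ hij]
  rw [hM] at h
  have := Matrix.posSemidef_diagonal_iff.mp h 0
  have h0 : (0:ℝ) ≤ f (l * x + (1 - l) * y) - (l * f x + (1 - l) * f y) :=
    Complex.zero_le_real.mp this
  linarith

lemma perspective_scalar (f : ℝ → ℝ) (hf : OperatorConcave f)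
    {x₁ x₂ y₁ y₂ l : ℝ} (hx₁ : 0 < x₁) (hx₂ : 0 < x₂) (hy₁ : 0 < y₁) (hy₂ : 0 < y₂)
    (hl0 : 0 ≤ l) (hl1 : l ≤ 1) :
    l * (y₁ * f (x₁ / y₁)) + (1 - l) * (y₂ * f (x₂ / y₂)) ≤
      (l * y₁ + (1 - l) * y₂) * f ((l * x₁ + (1 - l) * x₂) / (l * y₁ + (1 - l) * y₂)) := by
  set s := l * y₁ + (1 - l) * y₂ with hs_def
  have hs : 0 < s := by
    rcases eq_or_lt_of_le hl0 with h | h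
    · rw [hs_def, ← h]; ring_nf; linarith
    · nlinarith [mul_pos h hy₁, mul_nonneg (by linarith : (0:ℝ) ≤ 1 - l) hy₂.le]
  set μ := l * y₁ / s with hμ_def
  have hμ0 : 0 ≤ μ := div_nonneg (mul_nonneg hl0 hy₁.le) hs.le
  have hμ1 : μ ≤ 1 := by
    rw [hμ_def, div_le_one hs]
    nlinarith [mul_nonneg (by linarith : (0:ℝ) ≤ 1 - l) hy₂.le]
  have key := scalar_concave f hf (div_pos hx₁ hy₁) (div_pos hx₂ hy₂) hμ0 hμ1
  have harg : μ * (x₁ / y₁) + (1 - μ) * (x₂ / y₂) = (l * x₁ + (1 - l) * x₂) / s := by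
    rw [hμ_def, hs_def]
    have hs' : l * y₁ + (1 - l) * y₂ ≠ 0 := hs.ne'
    field_simp
    ring
  rw [harg] at key
  have h1 : s * μ = l * y₁ := by rw [hμ_def]; field_simp
  have h2 : s * (1 - μ) = (1 - l) * y₂ := by
    rw [hμ_def, mul_sub, mul_one]
    field_simp
    rw [hs_def]; ring
  have hmul := mul_le_mul_of_nonneg_left key hs.le
  have expand : s * (μ * f (x₁ / y₁) + (1 - μ) * f (x₂ / y₂))
      = l * (y₁ * f (x₁ / y₁)) + (1 - l) * (y₂ * f (x₂ / y₂)) := by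
    rw [mul_add, ← mul_assoc, ← mul_assoc, h1, h2]; ring
  rw [expand] at hmul
  exact hmul

/-- Joint concavity of the perspective `g(t,s) = s·f(t/s)` of an operator concave
function `f`, evaluated in commuting positive definite operators.  The four
pairwise-commuting positive definite operators are presented in a simultaneous
orthonormal eigenbasis, given by a common unitary `U` and positive eigenvalue
lists `a₁, a₂, b₁, b₂`; in this basis the joint functional calculus reads
`g(A,B) = U · diag(b i · f(a i / b i)) · U*`. -/
theorem perspective_jointly_concave {n : ℕ} (f : ℝ → ℝ)
    (hfpos : ∀ t : ℝ, 0 < t → 0 < f t) (hf : OperatorConcave f)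
    (U : Matrix.unitaryGroup (Fin n) ℂ) (a₁ a₂ b₁ b₂ : Fin n → ℝ)
    (ha₁ : ∀ i, 0 < a₁ i) (ha₂ : ∀ i, 0 < a₂ i)
    (hb₁ : ∀ i, 0 < b₁ i) (hb₂ : ∀ i, 0 < b₂ i)
    (l : ℝ) (hl0 : 0 ≤ l) (hl1 : l ≤ 1)
    (g : (Fin n → ℝ) → (Fin n → ℝ) → Matrix (Fin n) (Fin n) ℂ)
    (hg : ∀ a b, g a b = (U : Matrix (Fin n) (Fin n) ℂ) *
      Matrix.diagonal (fun i => ((b i * f (a i / b i) : ℝ) : ℂ)) *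
      star (U : Matrix (Fin n) (Fin n) ℂ)) :
    (g (fun i => l * a₁ i + (1 - l) * a₂ i) (fun i => l * b₁ i + (1 - l) * b₂ i) -
      (l • g a₁ b₁ + (1 - l) • g a₂ b₂)).PosSemidef := by
  set V : Matrix (Fin n) (Fin n) ℂ := (U : Matrix (Fin n) (Fin n) ℂ) with hV
  set d : Fin n → ℂ := fun i =>
    (((l * b₁ i + (1 - l) * b₂ i) *
        f ((l * a₁ i + (1 - l) * a₂ i) / (l * b₁ i + (1 - l) * b₂ i)) -
      (l * (b₁ i * f (a₁ i / b₁ i)) + (1 - l) * (b₂ i * f (a₂ i / b₂ i))) : ℝ) : ℂ) with hd_def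
  have lin : ∀ (D₀ D₁ D₂ : Matrix (Fin n) (Fin n) ℂ),
      V * D₀ * star V - (l • (V * D₁ * star V) + (1 - l) • (V * D₂ * star V))
      = V * (D₀ - (l • D₁ + (1 - l) • D₂)) * star V := by
    intro D₀ D₁ D₂
    rw [Matrix.mul_sub, Matrix.sub_mul, Matrix.mul_add, Matrix.add_mul,
      mul_smul_comm, mul_smul_comm, smul_mul_assoc, smul_mul_assoc]
  have hD : (Matrix.diagonal (fun i => (((fun i => l * b₁ i + (1 - l) * b₂ i) i *
        f ((fun i => l * a₁ i + (1 - l) * a₂ i) i / (fun i => l * b₁ i + (1 - l) * b₂ i) i)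
        : ℝ) : ℂ)) -
      (l • Matrix.diagonal (fun i => ((b₁ i * f (a₁ i / b₁ i) : ℝ) : ℂ)) +
       (1 - l) • Matrix.diagonal (fun i => ((b₂ i * f (a₂ i / b₂ i) : ℝ) : ℂ))))
      = Matrix.diagonal d := by
    ext i j
    by_cases hij : i = j
    · subst hij
      simp [hd_def, Matrix.diagonal_apply_eq]
      try push_cast
      try ring
    · simp [Matrix.diagonal_apply_ne _ hij]
  rw [hg, hg, hg, lin, hD, Matrix.star_eq_conjTranspose]
  refine Matrix.PosSemidef.mul_mul_conjTranspose_same (Matrix.PosSemidef.diagonal fun i => ?_) V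
  rw [hd_def]
  refine Complex.zero_le_real.mpr (sub_nonneg.mpr ?_)
  exact perspective_scalar f hf (ha₁ i) (ha₂ i) (hb₁ i) (hb₂ i) hl0 hl1
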